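/- Let n ≥ 2 and let A be a finite set whose elements are pairs (x, b) with x ∈ {1,…,n} and b ∈ {0,1}, such that for at least βn values of x both (x,0) ∈ A and (x,1) ∈ A. Let 2 ≤ ℓ ≤ |A|. Then the number of ℓ-element subsets u of A such that for no x both (x,0) ∈ u and (x,1) ∈ u is at most exp(−β·ℓ²/(32n)) · C(|A|, ℓ). -/

import Mathlib

open Finset

namespace Aux

variable {α : Type*} [DecidableEq α]

def Ind (pt : α → α) (u : Finset α) : Prop := ∀ e ∈ u, pt e ∉ u

instance (pt : α → α) : DecidablePred (Ind pt) := fun u => by unfold Ind; infer_instance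

variable (pt : α → α) (A : Finset α)

def F (k : ℕ) : Finset (Finset α) := (A.powersetCard k).filter (Ind pt)

def extSet (S : Finset α) : Finset α := (A \ S).filter (fun a => pt a ∉ S)

def jj (S : Finset α) : ℕ := ((A \ S).filter (fun a => pt a ∈ S)).card

def g (k : ℕ) (e : α) : ℕ := ((F pt A k).filter (fun S => e ∈ S)).card

lemma mem_F {k : ℕ} {S : Finset α} : S ∈ F pt A k ↔ S ⊆ A ∧ S.card = k ∧ Ind pt S := by
  simp [F, mem_filter, mem_powersetCard, and_assoc]

lemma F_zero : (F pt A 0).card = 1 := by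
  simp [F, Finset.powersetCard_zero, filter_singleton, Ind]

lemma extSet_card_add {k : ℕ} {S : Finset α} (hS : S ∈ F pt A k) :
    (extSet pt A S).card + jj pt A S = A.card - k := by
  obtain ⟨hSA, hcard, _⟩ := (mem_F pt A).1 hS
  have := Finset.card_filter_add_card_filter_not
    (s := A \ S) (p := fun a => pt a ∈ S)
  rw [Finset.card_sdiff_of_subset hSA, hcard] at this
  rw [extSet, jj, add_comm]
  convert this using 2

lemma jj_eq (hpt : ∀ e, pt (pt e) = e) {k : ℕ} {S : Finset α} (hS : S ∈ F pt A k) :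
    jj pt A S = (S.filter (fun a => pt a ∈ A)).card := by
  obtain ⟨hSA, hcard, hind⟩ := (mem_F pt A).1 hS
  apply Finset.card_nbij' (i := pt) (j := pt)
  · intro a ha
    simp only [mem_coe, mem_filter, mem_sdiff] at ha ⊢
    exact ⟨ha.2, by rw [hpt]; exact ha.1.1⟩
  · intro e he
    simp only [mem_coe, mem_filter, mem_sdiff] at he ⊢
    exact ⟨⟨he.2, hind _ he.1⟩, by rw [hpt]; exact he.1⟩
  · intro a _; exact hpt a
  · intro a _; exact hpt a

lemma ext_count (hpt : ∀ e, pt (pt e) = e) (hne : ∀ e, pt e ≠ e) (k : ℕ) :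
    (k+1) * (F pt A (k+1)).card = ∑ S ∈ F pt A k, (extSet pt A S).card := by
  have h1 : ((F pt A (k+1)).sigma (fun T => T)).card = (k+1) * (F pt A (k+1)).card := by
    rw [card_sigma]
    rw [Finset.sum_congr rfl (fun T hT => ((mem_F pt A).1 hT).2.1)]
    simp [mul_comm]
  have h2 : ((F pt A k).sigma (fun S => extSet pt A S)).card
      = ∑ S ∈ F pt A k, (extSet pt A S).card := card_sigma _ _
  rw [← h1, ← h2]
  apply Finset.card_nbij' (i := fun p => ⟨p.1.erase p.2, p.2⟩)
    (j := fun p => ⟨insert p.2 p.1, p.2⟩)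
  · rintro ⟨T, a⟩ hp
    change (⟨T, a⟩ : Σ _ : Finset α, α) ∈ (F pt A (k+1)).sigma (fun T => T) at hp
    change (⟨T.erase a, a⟩ : Σ _ : Finset α, α) ∈ (F pt A k).sigma (fun S => extSet pt A S)
    simp only [mem_sigma] at hp ⊢
    obtain ⟨hT, ha⟩ := hp
    obtain ⟨hTA, hcard, hind⟩ := (mem_F pt A).1 hT
    refine ⟨(mem_F pt A).2 ⟨(erase_subset a T).trans hTA, by rw [card_erase_of_mem ha, hcard]; rfl,
      fun e he => fun h => hind e (mem_of_mem_erase he) (mem_of_mem_erase h)⟩, ?_⟩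
    simp only [extSet, mem_filter, mem_sdiff, mem_erase]
    exact ⟨⟨hTA ha, fun h => h.1 rfl⟩, fun h => hind a ha h.2⟩
  · rintro ⟨S, a⟩ hp
    change (⟨S, a⟩ : Σ _ : Finset α, α) ∈ (F pt A k).sigma (fun S => extSet pt A S) at hp
    change (⟨insert a S, a⟩ : Σ _ : Finset α, α) ∈ (F pt A (k+1)).sigma (fun T => T)
    simp only [mem_sigma] at hp ⊢
    obtain ⟨hS, ha⟩ := hp
    obtain ⟨hSA, hcard, hind⟩ := (mem_F pt A).1 hS
    simp only [extSet, mem_filter, mem_sdiff] at ha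
    obtain ⟨⟨haA, haS⟩, hpa⟩ := ha
    refine ⟨(mem_F pt A).2 ⟨insert_subset haA hSA, by rw [card_insert_of_notMem haS, hcard],
      ?_⟩, mem_insert_self a S⟩
    intro e he
    rcases mem_insert.1 he with rfl | heS
    · intro h
      rcases mem_insert.1 h with h' | h'
      · exact hne e h'
      · exact hpa h'
    · intro h
      rcases mem_insert.1 h with h' | h'
      · exact hpa (by rw [← h', hpt]; exact heS)
      · exact hind e heS h'
  · rintro ⟨T, a⟩ hp
    change (⟨T, a⟩ : Σ _ : Finset α, α) ∈ (F pt A (k+1)).sigma (fun T => T) at hp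
    simp only [mem_sigma] at hp
    simp [insert_erase hp.2]
  · rintro ⟨S, a⟩ hp
    change (⟨S, a⟩ : Σ _ : Finset α, α) ∈ (F pt A k).sigma (fun S => extSet pt A S) at hp
    simp only [mem_sigma] at hp
    obtain ⟨hS, ha⟩ := hp
    simp only [extSet, mem_filter, mem_sdiff] at ha
    simp [erase_insert ha.1.2]

lemma sum_g (B : Finset α) (k : ℕ) :
    ∑ e ∈ B, g pt A k e = ∑ S ∈ F pt A k, (B ∩ S).card := by
  unfold g
  simp only [card_filter]
  rw [Finset.sum_comm]
  refine Finset.sum_congr rfl fun S _ => ?_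
  rw [← Finset.filter_mem_eq_inter, card_filter]

lemma inj_lemma (hpt : ∀ e, pt (pt e) = e) (hne : ∀ e, pt e ≠ e) (k : ℕ)
    {e e' : α} (heA : e ∈ A) (hpe : pt e ∈ A) (he' : e' ∈ A) (hpe' : pt e' ∉ A) :
    g pt A k e' ≤ g pt A k e + g pt A k (pt e) := by
  have hne1 : e' ≠ e := fun h => hpe' (h ▸ hpe)
  have hne2 : e' ≠ pt e := fun h => hpe' (by rw [h, hpt]; exact heA)
  have hcod : ((F pt A k).filter (fun S => e ∈ S ∨ pt e ∈ S)).card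
      ≤ g pt A k e + g pt A k (pt e) := by
    rw [filter_or]; exact card_union_le _ _
  refine le_trans ?_ hcod
  apply Finset.card_le_card_of_injOn
    (f := fun S => if e ∈ S ∨ pt e ∈ S then S else insert e (S.erase e'))
  · intro S hS
    simp only [mem_coe, mem_filter] at hS ⊢
    obtain ⟨hSF, he'S⟩ := hS
    obtain ⟨hSA, hcard, hind⟩ := (mem_F pt A).1 hSF
    by_cases hb : e ∈ S ∨ pt e ∈ S
    · simp only [if_pos hb, mem_filter]; exact ⟨hSF, hb⟩
    · have hb1 : e ∉ S := fun h => hb (Or.inl h)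
      have hb2 : pt e ∉ S := fun h => hb (Or.inr h)
      rw [if_neg hb]
      constructor
      · refine (mem_F pt A).2 ⟨insert_subset heA ((erase_subset _ _).trans hSA), ?_, ?_⟩
        · rw [card_insert_of_notMem (fun h => hb1 (mem_of_mem_erase h)),
            card_erase_of_mem he'S, hcard]
          have : 1 ≤ k := by rw [← hcard]; exact card_pos.2 ⟨e', he'S⟩
          omega
        · intro a ha
          rcases mem_insert.1 ha with rfl | haS
          · intro h
            rcases mem_insert.1 h with h' | h'
            · exact hne a h'
            · exact hb2 (mem_of_mem_erase h')
          · intro h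
            rcases mem_insert.1 h with h' | h'
            · exact hb2 (by rw [← h', hpt]; exact mem_of_mem_erase haS)
            · exact hind a (mem_of_mem_erase haS) (mem_of_mem_erase h')
      · exact Or.inl (mem_insert_self _ _)
  · intro S1 h1 S2 h2 heq
    simp only [mem_coe, mem_filter] at h1 h2
    obtain ⟨h1F, h1e⟩ := h1
    obtain ⟨h2F, h2e⟩ := h2
    by_cases b1 : e ∈ S1 ∨ pt e ∈ S1 <;> by_cases b2 : e ∈ S2 ∨ pt e ∈ S2 <;>
      simp only [if_pos, if_neg, b1, b2, if_true, if_false] at heq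
    · exact heq
    · exfalso
      have : e' ∉ insert e (S2.erase e') := by
        simp [hne1, mem_erase]
      rw [← heq] at this; exact this h1e
    · exfalso
      have : e' ∉ insert e (S1.erase e') := by
        simp [hne1, mem_erase]
      rw [heq] at this; exact this h2e
    · have hni1 : e ∉ S1.erase e' := fun h => (not_or.1 b1).1 (mem_of_mem_erase h)
      have hni2 : e ∉ S2.erase e' := fun h => (not_or.1 b2).1 (mem_of_mem_erase h)
      have := congrArg (fun t => insert e' (Finset.erase t e)) heq
      simpa [erase_insert hni1, erase_insert hni2, insert_erase h1e, insert_erase h2e]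
        using this

lemma key_count (hpt : ∀ e, pt (pt e) = e) (hne : ∀ e, pt e ≠ e) (k : ℕ) :
    (A.filter (fun e => pt e ∈ A)).card * (k * (F pt A k).card)
      ≤ 2 * A.card * ∑ S ∈ F pt A k, jj pt A S := by
  set Am := A.filter (fun e => pt e ∈ A) with hAm
  set As := A.filter (fun e => ¬ pt e ∈ A) with hAs
  -- total sum
  have h1 : ∑ e ∈ A, g pt A k e = k * (F pt A k).card := by
    rw [sum_g]
    rw [Finset.sum_congr rfl (fun S hS => ?_)]
    · rw [Finset.sum_const, smul_eq_mul, mul_comm]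
    · obtain ⟨hSA, hcard, _⟩ := (mem_F pt A).1 hS
      rw [Finset.inter_eq_right.2 hSA, hcard]
  -- matched sum
  have h2 : ∑ e ∈ Am, g pt A k e = ∑ S ∈ F pt A k, jj pt A S := by
    rw [sum_g]
    refine Finset.sum_congr rfl fun S hS => ?_
    obtain ⟨hSA, hcard, _⟩ := (mem_F pt A).1 hS
    rw [jj_eq pt A hpt hS]
    congr 1
    ext a
    simp only [hAm, mem_inter, mem_filter]
    exact ⟨fun h => ⟨h.2, h.1.2⟩, fun h => ⟨⟨hSA h.1, h.2⟩, h.1⟩⟩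
  -- pt-invariance of matched sum
  have h4 : ∑ e ∈ Am, g pt A k (pt e) = ∑ e ∈ Am, g pt A k e := by
    apply Finset.sum_nbij' (i := pt) (j := pt)
    · intro a ha
      simp only [hAm, mem_filter] at ha ⊢
      exact ⟨ha.2, by rw [hpt]; exact ha.1⟩
    · intro a ha
      simp only [hAm, mem_filter] at ha ⊢
      exact ⟨ha.2, by rw [hpt]; exact ha.1⟩
    · intro a _; exact hpt a
    · intro a _; exact hpt a
    · intro a _; rfl
  -- bound on unmatched sum
  have h5 : ∀ e' ∈ As, Am.card * g pt A k e' ≤ 2 * ∑ e ∈ Am, g pt A k e := by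
    intro e' he'
    simp only [hAs, mem_filter] at he'
    calc Am.card * g pt A k e' = ∑ e ∈ Am, g pt A k e' := by
          rw [Finset.sum_const, smul_eq_mul]
      _ ≤ ∑ e ∈ Am, (g pt A k e + g pt A k (pt e)) := by
          refine Finset.sum_le_sum fun e he => ?_
          simp only [hAm, mem_filter] at he
          exact inj_lemma pt A hpt hne k he.1 he.2 he'.1 he'.2
      _ = 2 * ∑ e ∈ Am, g pt A k e := by
          rw [Finset.sum_add_distrib, h4]; ring
  have h6 : Am.card * ∑ e ∈ As, g pt A k e ≤ As.card * (2 * ∑ e ∈ Am, g pt A k e) := by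
    rw [Finset.mul_sum]
    calc ∑ e ∈ As, Am.card * g pt A k e ≤ ∑ _e ∈ As, 2 * ∑ e ∈ Am, g pt A k e :=
          Finset.sum_le_sum h5
      _ = As.card * (2 * ∑ e ∈ Am, g pt A k e) := by rw [Finset.sum_const, smul_eq_mul]
  have hsplit : ∑ e ∈ Am, g pt A k e + ∑ e ∈ As, g pt A k e = ∑ e ∈ A, g pt A k e :=
    Finset.sum_filter_add_sum_filter_not A _ _
  have hcardsplit : Am.card + As.card = A.card :=
    Finset.card_filter_add_card_filter_not _
  rw [← h1, ← h2, ← hsplit]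
  set Gm := ∑ e ∈ Am, g pt A k e
  set Gs := ∑ e ∈ As, g pt A k e
  nlinarith [Nat.zero_le Gm, Nat.zero_le Gs, Nat.zero_le Am.card, Nat.zero_le As.card]

lemma main_bound (hpt : ∀ e, pt (pt e) = e) (hne : ∀ e, pt e ≠ e) (k : ℕ)
    (hk : k ≤ A.card) :
    ((F pt A k).card : ℝ) ≤
      Real.exp (-((A.filter (fun e => pt e ∈ A)).card : ℝ) * k * ((k : ℝ) - 1)
          / (4 * (A.card : ℝ) ^ 2)) * (A.card.choose k : ℝ) := by
  induction k with
  | zero => simp [F_zero]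
  | succ k ih =>
    have hkN : k < A.card := hk
    have ih' := ih (le_of_lt hkN)
    set c : ℝ := ((A.filter (fun e => pt e ∈ A)).card : ℝ) with hc
    have hc0 : 0 ≤ c := Nat.cast_nonneg _
    set N : ℕ := A.card with hN
    have hN0 : (0:ℝ) < (N:ℝ) := by
      have : 0 < N := lt_of_le_of_lt (Nat.zero_le _) hkN
      exact_mod_cast this
    have hkN' : (k : ℝ) < (N : ℝ) := by exact_mod_cast hkN
    have hsub : ((N - k : ℕ) : ℝ) = (N:ℝ) - (k:ℝ) := Nat.cast_sub hkN.le
    have natid : (k+1) * (F pt A (k+1)).card + (∑ S ∈ F pt A k, jj pt A S)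
        = (F pt A k).card * (N - k) := by
      rw [ext_count pt A hpt hne k, ← Finset.sum_add_distrib,
        Finset.sum_congr rfl (fun S hS => extSet_card_add pt A hS),
        Finset.sum_const, smul_eq_mul]
    have hfk0 : (0:ℝ) ≤ ((F pt A k).card : ℝ) := Nat.cast_nonneg _
    have A1 : ((k:ℝ)+1) * ((F pt A (k+1)).card : ℝ)
        + ((∑ S ∈ F pt A k, jj pt A S : ℕ) : ℝ)
        = ((F pt A k).card : ℝ) * (((N - k : ℕ)) : ℝ) := by exact_mod_cast natid
    rw [hsub] at A1
    have A2 : c * ((k:ℝ) * ((F pt A k).card : ℝ))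
        ≤ 2 * (N:ℝ) * ((∑ S ∈ F pt A k, jj pt A S : ℕ) : ℝ) := by
      rw [hc]
      exact_mod_cast key_count pt A hpt hne k
    have hNk0 : (0:ℝ) < (N:ℝ) - k := by linarith
    set t0 : ℝ := c * k / (2 * (N:ℝ)^2) with ht0
    have A3 : ((F pt A k).card : ℝ) * ((N:ℝ) - k) - c * k / (2 * N) * ((F pt A k).card : ℝ)
        ≤ Real.exp (-t0) * (((N:ℝ) - k) * ((F pt A k).card : ℝ)) := by
      set x : ℝ := c * k / (2 * (N:ℝ) * ((N:ℝ) - k)) with hx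
      have hx0 : 0 ≤ x := by positivity
      have h1x : 1 - x ≤ Real.exp (-x) := by
        have := Real.add_one_le_exp (-x)
        linarith
      have hxt : -x ≤ -t0 := by
        rw [ht0, hx, neg_le_neg_iff]
        apply div_le_div_of_nonneg_left (by positivity) (by positivity)
        nlinarith
      have hmono : Real.exp (-x) ≤ Real.exp (-t0) := Real.exp_le_exp.2 hxt
      have key : (1 - x) * (((N:ℝ) - k) * ((F pt A k).card : ℝ))
          ≤ Real.exp (-t0) * (((N:ℝ) - k) * ((F pt A k).card : ℝ)) :=
        mul_le_mul_of_nonneg_right (le_trans h1x hmono) (by positivity)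
      calc ((F pt A k).card : ℝ) * ((N:ℝ) - k) - c * k / (2 * N) * ((F pt A k).card : ℝ)
          = (1 - x) * (((N:ℝ) - k) * ((F pt A k).card : ℝ)) := by
            rw [hx]; field_simp
        _ ≤ _ := key
    have A6 : ((N:ℝ) - k) * (N.choose k : ℝ) = ((k:ℝ)+1) * (N.choose (k+1) : ℝ) := by
      have h2 : ((N.choose (k+1) * (k+1) : ℕ) : ℝ) = ((N.choose k * (N - k) : ℕ) : ℝ) := by
        exact_mod_cast congrArg (Nat.cast : ℕ → ℝ) (Nat.choose_succ_right_eq N k)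
      push_cast [hsub] at h2
      linarith
    set Ek : ℝ := -c * k * ((k:ℝ) - 1) / (4 * (N:ℝ)^2) with hEk
    have A7 : Real.exp (-t0) * Real.exp Ek
        = Real.exp (-c * ((k:ℝ)+1) * (((k:ℝ)+1) - 1) / (4 * (N:ℝ)^2)) := by
      rw [← Real.exp_add]
      congr 1
      rw [ht0, hEk]
      field_simp
      ring
    have h2N : (0:ℝ) < 2 * (N:ℝ) := by positivity
    have hJge : c * k / (2*(N:ℝ)) * ((F pt A k).card : ℝ)
        ≤ ((∑ S ∈ F pt A k, jj pt A S : ℕ) : ℝ) := by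
      rw [div_mul_eq_mul_div, div_le_iff₀ h2N]
      ring_nf
      ring_nf at A2
      linarith [A2]
    have step1 : ((k:ℝ)+1) * ((F pt A (k+1)).card : ℝ)
        ≤ ((F pt A k).card : ℝ) * ((N:ℝ) - k) - c * k / (2 * N) * ((F pt A k).card : ℝ) := by
      linarith
    have step2 : ((k:ℝ)+1) * ((F pt A (k+1)).card : ℝ)
        ≤ Real.exp (-t0) * (((N:ℝ) - k) * (Real.exp Ek * (N.choose k : ℝ))) := by
      have h5 : Real.exp (-t0) * (((N:ℝ) - k) * ((F pt A k).card : ℝ))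
          ≤ Real.exp (-t0) * (((N:ℝ) - k) * (Real.exp Ek * (N.choose k : ℝ))) := by
        apply mul_le_mul_of_nonneg_left _ (Real.exp_nonneg _)
        exact mul_le_mul_of_nonneg_left ih' (le_of_lt hNk0)
      linarith
    have final : ((k:ℝ)+1) * ((F pt A (k+1)).card : ℝ)
        ≤ ((k:ℝ)+1) * (Real.exp (-c * ((k:ℝ)+1) * (((k:ℝ)+1) - 1) / (4 * (N:ℝ)^2))
            * (N.choose (k+1) : ℝ)) := by
      calc ((k:ℝ)+1) * ((F pt A (k+1)).card : ℝ)
          ≤ Real.exp (-t0) * (((N:ℝ) - k) * (Real.exp Ek * (N.choose k : ℝ))) := step2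
        _ = Real.exp (-t0) * Real.exp Ek * (((N:ℝ) - k) * (N.choose k : ℝ)) := by ring
        _ = Real.exp (-t0) * Real.exp Ek * (((k:ℝ)+1) * (N.choose (k+1) : ℝ)) := by rw [A6]
        _ = ((k:ℝ)+1) * (Real.exp (-c * ((k:ℝ)+1) * (((k:ℝ)+1) - 1) / (4 * (N:ℝ)^2))
              * (N.choose (k+1) : ℝ)) := by rw [A7]; ring
    have hk1pos : (0:ℝ) < (k:ℝ)+1 := by positivity
    have hres := (mul_le_mul_iff_right₀ hk1pos).1 final
    have hexp : -c * ((k:ℝ)+1) * (((k:ℝ)+1) - 1) / (4 * (N:ℝ)^2)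
        = -c * ((k+1 : ℕ):ℝ) * (((k+1 : ℕ):ℝ) - 1) / (4 * (N:ℝ)^2) := by push_cast; ring
    rw [hexp] at hres
    exact hres


end Aux

/-- if for at least `βn` variables `x` both `(x,0)` and `(x,1)` lie in `A`,
then the number of `ℓ`-subsets of `A` containing no such complementary pair is at most
`exp(−β ℓ²/(32 n)) · C(|A|, ℓ)`. -/
theorem count_consistent_subsets_le {n : ℕ} (hn : 2 ≤ n) (A : Finset (Fin n × Bool))
    (β : ℝ) (hβ0 : 0 < β) (hβ1 : β ≤ 1)
    (hmany : β * n ≤ ((Finset.univ.filter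
        (fun x : Fin n => (x, false) ∈ A ∧ (x, true) ∈ A)).card : ℝ))
    (ℓ : ℕ) (hℓ2 : 2 ≤ ℓ) (hℓA : ℓ ≤ A.card) :
    (((A.powersetCard ℓ).filter
        (fun u => ∀ x : Fin n, ¬ ((x, false) ∈ u ∧ (x, true) ∈ u))).card : ℝ)
      ≤ Real.exp (-β * ℓ ^ 2 / (32 * n)) * (A.card.choose ℓ : ℝ) := by
  classical
  set pt : Fin n × Bool → Fin n × Bool := fun e => (e.1, !e.2) with hptdef
  have hpt : ∀ e, pt (pt e) = e := by intro e; simp [hptdef]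
  have hne : ∀ e, pt e ≠ e := by
    intro e h
    have := congrArg Prod.snd h
    simp [hptdef] at this
  -- identify the filtered family with F
  have hFeq : ((A.powersetCard ℓ).filter
      (fun u => ∀ x : Fin n, ¬ ((x, false) ∈ u ∧ (x, true) ∈ u))) = Aux.F pt A ℓ := by
    unfold Aux.F
    apply Finset.filter_congr
    intro u _
    constructor
    · intro h e he hpe
      obtain ⟨x, b⟩ := e
      cases b
      · exact h x ⟨he, hpe⟩
      · exact h x ⟨hpe, he⟩
    · intro h x hx
      exact h (x, false) hx.1 hx.2
  -- the matched set
  set M : Finset (Fin n) := Finset.univ.filter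
      (fun x : Fin n => (x, false) ∈ A ∧ (x, true) ∈ A) with hM
  have hAmM : (A.filter (fun e => pt e ∈ A)) = M ×ˢ (Finset.univ : Finset Bool) := by
    ext ⟨x, b⟩
    simp only [Finset.mem_filter, Finset.mem_product, hM, Finset.mem_univ, true_and, and_true,
      hptdef]
    cases b <;> simp <;> tauto
  have hAmcard : (A.filter (fun e => pt e ∈ A)).card = M.card * 2 := by
    rw [hAmM, Finset.card_product]
    simp
  -- size bound on A
  have hA2n : A.card ≤ 2 * n := by
    have := Finset.card_le_univ A
    simpa [Fintype.card_prod, mul_comm] using this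
  -- main bound
  have hmain := Aux.main_bound pt A hpt hne ℓ hℓA
  rw [hFeq]
  refine le_trans hmain ?_
  apply mul_le_mul_of_nonneg_right _ (Nat.cast_nonneg _)
  rw [Real.exp_le_exp]
  -- numeric comparison
  have hn0 : (0:ℝ) < n := by exact_mod_cast lt_of_lt_of_le (by norm_num) hn
  have hN0 : (0:ℝ) < (A.card : ℝ) := by
    have : 0 < A.card := lt_of_lt_of_le (by omega) hℓA
    exact_mod_cast this
  have hl2 : (2:ℝ) ≤ (ℓ:ℝ) := by exact_mod_cast hℓ2
  have hc2 : 2 * (β * n) ≤ ((A.filter (fun e => pt e ∈ A)).card : ℝ) := by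
    rw [hAmcard]
    push_cast
    nlinarith [hmany]
  have hNle : ((A.card : ℝ)) ≤ 2 * n := by exact_mod_cast hA2n
  rw [neg_mul, neg_mul, neg_div, neg_mul, neg_div, neg_le_neg_iff]
  rw [div_le_div_iff₀ (by positivity) (by positivity)]
  set c : ℝ := ((A.filter (fun e => pt e ∈ A)).card : ℝ)
  have hc0 : 0 ≤ c := Nat.cast_nonneg _
  have hNsq : ((A.card : ℝ))^2 ≤ 4 * (n:ℝ)^2 := by nlinarith
  have hl1 : (ℓ:ℝ) ≤ 2 * ((ℓ:ℝ) - 1) := by linarith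
  -- goal : β * ℓ^2 * (4 * A.card^2) ≤ c * ℓ * (ℓ - 1) * (32 * n)
  have s1 : β * (ℓ:ℝ)^2 * (4 * ((A.card:ℝ))^2) ≤ β * (ℓ:ℝ)^2 * (16 * (n:ℝ)^2) := by
    nlinarith [mul_le_mul_of_nonneg_left hNsq (by positivity : (0:ℝ) ≤ 4 * β * (ℓ:ℝ)^2)]
  have s2 : β * (ℓ:ℝ)^2 * (16 * (n:ℝ)^2) ≤ 32 * β * (n:ℝ)^2 * (ℓ:ℝ) * ((ℓ:ℝ) - 1) := by
    nlinarith [mul_le_mul_of_nonneg_left hl1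
      (by positivity : (0:ℝ) ≤ 16 * β * (n:ℝ)^2 * (ℓ:ℝ))]
  have s3 : 32 * β * (n:ℝ)^2 * (ℓ:ℝ) * ((ℓ:ℝ) - 1) ≤ c * (ℓ:ℝ) * ((ℓ:ℝ) - 1) * (32 * n) := by
    have hll : (0:ℝ) ≤ (ℓ:ℝ) - 1 := by linarith
    have h16 : (0:ℝ) ≤ 16 * (n:ℝ) * (ℓ:ℝ) * ((ℓ:ℝ) - 1) :=
      mul_nonneg (by positivity) hll
    nlinarith [mul_le_mul_of_nonneg_left hc2 h16]
  linarith
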